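/- Let A be an integral domain which is a ℂ-algebra, and let ∂ and δ be two nonzero locally nilpotent derivations of A. Then ∂ and δ are equivalent (Ker ∂ = Ker δ) if and only if they generate the same degree function, i.e. for every nonzero a ∈ A and every k ∈ ℕ one has ∂^k(a) = 0 if and only if δ^k(a) = 0. Furthermore, if Ker ∂ = Ker δ then there exist nonzero elements α, β ∈ Ker ∂ such that α·∂ = β·δ, i.e. α·∂(a) = β·δ(a) for all a ∈ A. -/
import Mathlib
open Polynomial
set_option linter.unusedSectionVars false
set_option synthInstance.maxHeartbeats 400000
set_option maxHeartbeats 1600000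

section aux
variable {A : Type*} [CommRing A] [IsDomain A] [Algebra ℂ A]

/-- The kernel of a derivation, as a subalgebra. -/
def kerAlg (D : Derivation ℂ A A) : Subalgebra ℂ A where
  carrier := {a | D a = 0}
  add_mem' := by intro a b ha hb; simp only [Set.mem_setOf_eq] at *; rw [map_add, ha, hb, add_zero]
  mul_mem' := by
    intro a b ha hb; simp only [Set.mem_setOf_eq] at *
    rw [Derivation.leibniz, ha, hb, smul_zero, smul_zero, add_zero]
  algebraMap_mem' := fun c => by
    simp only [Set.mem_setOf_eq, Derivation.map_algebraMap]

@[simp] lemma mem_kerAlg {D : Derivation ℂ A A} {a : A} : a ∈ kerAlg D ↔ D a = 0 := Iff.rfl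

/-- A derivation vanishing on `kerAlg D` as a derivation over `kerAlg D`. -/
def toKerDerivation (D E : Derivation ℂ A A) (h : ∀ x ∈ kerAlg D, E x = 0) :
    Derivation (kerAlg D) A A where
  toFun := E
  map_add' := map_add E
  map_smul' := fun k a => by
    simp only [RingHom.id_apply]
    rw [Algebra.smul_def, Algebra.smul_def]
    have hk : (algebraMap (kerAlg D) A k : A) = (k : A) := rfl
    rw [hk, Derivation.leibniz, h (k : A) k.2, smul_eq_mul, smul_eq_mul, mul_zero, add_zero]
  map_one_eq_zero' := E.map_one_eq_zero
  leibniz' := E.leibniz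

@[simp] lemma toKerDerivation_apply (D E : Derivation ℂ A A) (h : ∀ x ∈ kerAlg D, E x = 0)
    (a : A) : toKerDerivation D E h a = E a := rfl

end aux

section aux
variable {A : Type*} [CommRing A] [IsDomain A] [Algebra ℂ A]
variable {K : Subalgebra ℂ A} (D' : Derivation K A A) (r : A)

lemma coe_mem_ker (x : K) : D' (x : A) = 0 := by
  have : (x : A) = algebraMap K A x := rfl
  rw [this, Derivation.map_algebraMap]

lemma chain_rule (P : K[X]) : D' (aeval r P) = aeval r (derivative P) * D' r := by
  rw [Derivation.map_aeval, smul_eq_mul]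

lemma chain_rule_iter (hr : D' r ∈ K) (k : ℕ) (P : K[X]) :
    (D'.toLinearMap ^ k) (aeval r P) = aeval r (derivative^[k] P) * (D' r) ^ k := by
  induction k with
  | zero => simp
  | succ k ih =>
      rw [pow_succ', Module.End.mul_apply, ih]
      show D' _ = _
      rw [ Derivation.leibniz,
        smul_eq_mul, smul_eq_mul]
      have h1 : D' ((D' r) ^ k) = 0 := coe_mem_ker D' ⟨D' r, hr⟩ ▸ by
        rw [Derivation.leibniz_pow, coe_mem_ker D' ⟨D' r, hr⟩, smul_zero, smul_zero]
      rw [h1, mul_zero, zero_add, chain_rule, Function.iterate_succ_apply', pow_succ]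
      ring
end aux

section aux2
variable {A : Type*} [CommRing A] [IsDomain A] [Algebra ℂ A]
variable {K : Subalgebra ℂ A} (D' : Derivation K A A) (r : A)

lemma aeval_ne_zero_of_ne_zero (hr : D' r ∈ K) (hf : D' r ≠ 0) (P : K[X]) (hP : P ≠ 0) :
    aeval r P ≠ 0 := by
  haveI : CharZero A := charZero_of_injective_algebraMap (algebraMap ℂ A).injective
  set d := P.natDegree with hd
  have h := chain_rule_iter D' r hr d P
  have hQdeg : (derivative^[d] P).natDegree ≤ 0 := by
    have := natDegree_iterate_derivative P d
    omega
  have hQ : derivative^[d] P = C ((derivative^[d] P).coeff 0) :=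
    eq_C_of_natDegree_le_zero hQdeg
  have hc : (derivative^[d] P).coeff 0 = d.factorial • P.coeff d := by
    rw [coeff_iterate_derivative, zero_add, Nat.descFactorial_self]
  have hlc : P.coeff d ≠ 0 := by
    rw [hd]; exact mt leadingCoeff_eq_zero.mp hP
  have hcne : d.factorial • P.coeff d ≠ 0 := by
    rw [nsmul_eq_mul]
    exact mul_ne_zero (Nat.cast_ne_zero.mpr d.factorial_ne_zero) hlc
  intro habs
  rw [habs, map_zero, hQ, hc, aeval_C] at h
  have : (algebraMap K A) (d.factorial • P.coeff d) * D' r ^ d ≠ 0 := by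
    refine mul_ne_zero ?_ (pow_ne_zero _ hf)
    simpa using hcne
  exact this h.symm

/-- Antiderivative of a polynomial over a `ℂ`-algebra. -/
lemma exists_antideriv (P : K[X]) : ∃ Q : K[X], derivative Q = P := by
  refine ⟨P.sum fun i c => C ((((i : ℂ) + 1))⁻¹ • c) * X ^ (i + 1), ?_⟩
  rw [Polynomial.sum_def, map_sum]
  conv_rhs => rw [P.as_sum_support_C_mul_X_pow]
  refine Finset.sum_congr rfl fun i _ => ?_
  rw [derivative_C_mul_X_pow, Nat.add_sub_cancel]
  congr 1
  rw [mul_comm, ← nsmul_eq_mul, ← Nat.cast_smul_eq_nsmul ℂ, smul_smul]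
  push_cast
  rw [mul_inv_cancel₀ (by exact_mod_cast Nat.succ_ne_zero i : (i : ℂ) + 1 ≠ 0), one_smul]
end aux2

section aux3
variable {A : Type*} [CommRing A] [IsDomain A] [Algebra ℂ A]
variable {K : Subalgebra ℂ A} (D' : Derivation K A A) (r : A)

lemma slice' (hr : D' r ∈ K) (hker : ∀ x : A, D' x = 0 → x ∈ K) :
    ∀ (k : ℕ) (a : A), (D'.toLinearMap ^ k) a = 0 →
      ∃ (m : ℕ) (P : K[X]), (D' r) ^ m * a = aeval r P := by
  intro k
  induction k with
  | zero =>
      intro a ha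
      simp only [pow_zero, Module.End.one_apply] at ha
      exact ⟨0, 0, by simp [ha]⟩
  | succ k ih =>
      intro a ha
      have ha' : (D'.toLinearMap ^ k) (D' a) = 0 := by
        rw [pow_succ, Module.End.mul_apply] at ha
        exact ha
      obtain ⟨m, P, hP⟩ := ih (D' a) ha'
      obtain ⟨Q, hQ⟩ := exists_antideriv P
      have hfK : D' (D' r) = 0 := coe_mem_ker D' ⟨D' r, hr⟩
      have hfpow : D' ((D' r) ^ (m + 1)) = 0 := by
        rw [Derivation.leibniz_pow, hfK, smul_zero, smul_zero]
      have hb : D' ((D' r) ^ (m + 1) * a - aeval r Q) = 0 := by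
        rw [map_sub, Derivation.leibniz, chain_rule, hQ, smul_eq_mul, smul_eq_mul, hfpow,
          mul_zero, add_zero, ← hP]
        ring
      refine ⟨m + 1, Q + C ⟨_, hker _ hb⟩, ?_⟩
      simp only [map_add, aeval_C]
      show _ = aeval r Q + ((D' r) ^ (m+1) * a - aeval r Q)
      ring
end aux3
-- derivative degree lemma
lemma deriv_deg {R : Type*} [CommRing R] [CharZero R] [NoZeroDivisors R] (p : R[X])
    (hp : 1 ≤ p.natDegree) :
    derivative p ≠ 0 ∧ (derivative p).natDegree = p.natDegree - 1 := by
  set n := p.natDegree with hn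
  have hc : (derivative p).coeff (n - 1) ≠ 0 := by
    rw [coeff_derivative]
    have h1 : n - 1 + 1 = n := by omega
    rw [h1]
    refine mul_ne_zero ?_ ?_
    · have hp0 : p ≠ 0 := fun h => by rw [h, natDegree_zero] at hn; omega
      rw [hn]; exact mt leadingCoeff_eq_zero.mp hp0
    · exact_mod_cast Nat.succ_ne_zero (n - 1)
  have hne : derivative p ≠ 0 := fun h => hc (by simp [h])
  refine ⟨hne, le_antisymm (natDegree_derivative_le p) (le_natDegree_of_ne_zero hc)⟩



/-- **Theorem 5.1(3)**: two nonzero locally nilpotent derivations `∂, δ` of a domain `A`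
over `ℂ` are equivalent (`Ker ∂ = Ker δ`) iff they generate the same degree function
(for every nonzero `a` and every `k`, `∂^k a = 0 ↔ δ^k a = 0`).  Furthermore, if
`Ker ∂ = Ker δ` then there exist nonzero `α, β ∈ Ker ∂` with `α·∂ = β·δ`. -/
theorem stmt18 (A : Type*) [CommRing A] [IsDomain A] [Algebra ℂ A]
    (D E : Derivation ℂ A A) (hD : D ≠ 0) (hE : E ≠ 0)
    (hlnD : ∀ a : A, ∃ k : ℕ, (D.toLinearMap ^ k) a = 0)
    (hlnE : ∀ a : A, ∃ k : ℕ, (E.toLinearMap ^ k) a = 0) :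
    ((∀ a : A, D a = 0 ↔ E a = 0) ↔
      (∀ a : A, a ≠ 0 → ∀ k : ℕ,
        (D.toLinearMap ^ k) a = 0 ↔ (E.toLinearMap ^ k) a = 0)) ∧
    ((∀ a : A, D a = 0 ↔ E a = 0) →
      ∃ α β : A, α ≠ 0 ∧ β ≠ 0 ∧ D α = 0 ∧ D β = 0 ∧
        ∀ a : A, α * D a = β * E a) := by
  haveI : CharZero A := charZero_of_injective_algebraMap (algebraMap ℂ A).injective
  have key : (∀ a : A, D a = 0 ↔ E a = 0) →
      ∃ α β : A, α ≠ 0 ∧ β ≠ 0 ∧ D α = 0 ∧ D β = 0 ∧ ∀ a : A, α * D a = β * E a := by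
    intro hKer
    have hE0 : ∀ x ∈ kerAlg D, E x = 0 := fun x hx => (hKer x).1 hx
    have hD0 : ∀ x ∈ kerAlg D, D x = 0 := fun x hx => hx
    set D' := toKerDerivation D D hD0 with hD'def
    set E' := toKerDerivation D E hE0 with hE'def
    have hD'a : ∀ a, D' a = D a := fun a => rfl
    have hE'a : ∀ a, E' a = E a := fun a => rfl
    -- find a local slice r
    obtain ⟨a₀, ha₀⟩ : ∃ a, D a ≠ 0 := by
      by_contra h
      push_neg at h
      exact hD (by ext a; simpa using h a)
    obtain ⟨r, hr1, hr2⟩ : ∃ r, D r ≠ 0 ∧ D (D r) = 0 := by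
      obtain ⟨k, hk⟩ := hlnD a₀
      have H : ∀ k, ∀ a : A, (D.toLinearMap ^ k) a = 0 → D a ≠ 0 →
          ∃ r, D r ≠ 0 ∧ D (D r) = 0 := by
        intro k
        induction k with
        | zero =>
            intro a ha hDa
            simp only [pow_zero, Module.End.one_apply] at ha
            exact absurd (ha ▸ map_zero D) hDa
        | succ k ih =>
            intro a ha hDa
            by_cases h2 : D (D a) = 0
            · exact ⟨a, hDa, h2⟩
            · exact ih (D a) (by rw [pow_succ, Module.End.mul_apply] at ha; exact ha) h2
      exact H k a₀ hk ha₀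
    set f := D r with hfdef
    have hrK : D' r ∈ kerAlg D := hr2
    have hD'r : D' r = f := rfl
    -- transfer of iterates
    have hlnD' : ∀ (k : ℕ) (a : A), (D'.toLinearMap ^ k) a = (D.toLinearMap ^ k) a := by
      intro k
      induction k with
      | zero => intro a; rfl
      | succ k ih =>
          intro a
          rw [pow_succ, pow_succ, Module.End.mul_apply, Module.End.mul_apply, ih]
          rfl
    have hkerK : ∀ x : A, D' x = 0 → x ∈ kerAlg D := fun x hx => hx
    have hpowE : ∀ (n : ℕ) (x : A), (E.toLinearMap ^ (n + 1)) x = E ((E.toLinearMap ^ n) x) :=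
      fun n x => by rw [pow_succ', Module.End.mul_apply]; rfl
    set s := E r with hsdef
    have hs0 : s ≠ 0 := fun h => hr1 ((hKer r).2 h)
    -- D s = 0
    have hDs : D s = 0 := by
      obtain ⟨k, hk⟩ := hlnD s
      obtain ⟨m, P, hP⟩ := slice' D' r hrK hkerK k s (by rw [hlnD' k s]; exact hk)
      rw [hD'r] at hP
      by_cases hdeg : P.natDegree = 0
      · have hPC : P = C (P.coeff 0) := eq_C_of_natDegree_le_zero (le_of_eq hdeg)
        rw [hPC, aeval_C] at hP
        have h4 : D (f ^ m * s) = 0 := by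
          rw [hP]
          exact (P.coeff 0).2
        have h3 : D (f ^ m * s) = f ^ m * D s := by
          rw [Derivation.leibniz, smul_eq_mul, smul_eq_mul, Derivation.leibniz_pow, hr2,
            smul_zero, smul_zero, mul_zero, add_zero]
        rw [h3] at h4
        exact (mul_eq_zero.mp h4).resolve_left (pow_ne_zero _ hr1)
      · exfalso
        have hn : 1 ≤ P.natDegree := Nat.one_le_iff_ne_zero.mpr hdeg
        have hPne : P ≠ 0 := fun h => hdeg (by rw [h, natDegree_zero])
        have hEf : E f = 0 := (hKer f).1 hr2
        have claim : ∀ k : ℕ, ∃ Pk : (kerAlg D)[X], Pk ≠ 0 ∧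
            Pk.natDegree = k * (P.natDegree - 1) + P.natDegree ∧
            f ^ ((k + 1) * m) * ((E.toLinearMap) ^ (k + 1)) r = aeval r Pk := by
          intro k
          induction k with
          | zero =>
              refine ⟨P, hPne, by ring, ?_⟩
              rw [zero_add, one_mul, pow_one]
              exact hP
          | succ k ih =>
              obtain ⟨Pk, h1, h2, h3⟩ := ih
              have hEfpow : E (f ^ ((k + 1) * m)) = 0 := by
                rw [Derivation.leibniz_pow, hEf, smul_zero, smul_zero]
              have hstep : f ^ ((k + 1) * m) * ((E.toLinearMap) ^ (k + 2)) r =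
                  aeval r (derivative Pk) * s := by
                have hE3 := congrArg E h3
                rw [Derivation.leibniz, smul_eq_mul, smul_eq_mul, hEfpow, mul_zero, add_zero]
                  at hE3
                have hch : E (aeval r Pk) = aeval r (derivative Pk) * s := by
                  have := chain_rule E' r Pk
                  rw [hE'a, hE'a] at this
                  exact this
                rw [hch] at hE3
                rw [← hpowE (k + 1) r] at hE3
                exact hE3
              haveI : CharZero (kerAlg D) := inferInstance
              obtain ⟨hder, hderdeg⟩ := deriv_deg Pk (by rw [h2]; omega)
              refine ⟨derivative Pk * P, mul_ne_zero hder hPne, ?_, ?_⟩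
              · rw [natDegree_mul hder hPne, hderdeg, h2]
                have hexp : (k + 1) * (P.natDegree - 1) =
                    k * (P.natDegree - 1) + (P.natDegree - 1) := by ring
                omega
              · rw [map_mul]
                have harith : (k + 1 + 1) * m = m + (k + 1) * m := by ring
                rw [harith, pow_add]
                calc f ^ m * f ^ ((k + 1) * m) * ((E.toLinearMap) ^ (k + 2)) r
                    = f ^ m * (f ^ ((k + 1) * m) * ((E.toLinearMap) ^ (k + 2)) r) := by ring
                  _ = f ^ m * (aeval r (derivative Pk) * s) := by rw [hstep]
                  _ = aeval r (derivative Pk) * (f ^ m * s) := by ring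
                  _ = aeval r (derivative Pk) * aeval r P := by rw [hP]
        obtain ⟨k0, hk0⟩ := hlnE r
        rcases k0 with _ | j
        · simp only [pow_zero, Module.End.one_apply] at hk0
          exact hr1 (by show D r = 0; rw [hk0, map_zero])
        · obtain ⟨Pj, hj1, hj2, hj3⟩ := claim j
          rw [hk0, mul_zero] at hj3
          exact aeval_ne_zero_of_ne_zero D' r hrK (hD'r ▸ hr1) Pj hj1 hj3.symm
    -- the identity
    have hid : ∀ a : A, s * D a = f * E a := by
      intro a
      obtain ⟨k, hk⟩ := hlnD a
      obtain ⟨M, Q, hQ⟩ := slice' D' r hrK hkerK k a (by rw [hlnD' k a]; exact hk)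
      rw [hD'r] at hQ
      have hch1 : E (aeval r Q) = aeval r (derivative Q) * s := by
        have := chain_rule E' r Q
        rw [hE'a, hE'a] at this
        exact this
      have hch2 : D (aeval r Q) = aeval r (derivative Q) * f := by
        have := chain_rule D' r Q
        rw [hD'a, hD'a] at this
        exact this
      have hE2 : E (f ^ M * a) = f ^ M * E a := by
        rw [Derivation.leibniz, smul_eq_mul, smul_eq_mul, Derivation.leibniz_pow,
          (hKer f).1 hr2, smul_zero, smul_zero, mul_zero, add_zero]
      have hD2 : D (f ^ M * a) = f ^ M * D a := by
        rw [Derivation.leibniz, smul_eq_mul, smul_eq_mul, Derivation.leibniz_pow, hr2,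
          smul_zero, smul_zero, mul_zero, add_zero]
      have hcomb : f ^ M * (f * E a) = f ^ M * (s * D a) := by
        calc f ^ M * (f * E a) = f * E (f ^ M * a) := by rw [hE2]; ring
          _ = f * E (aeval r Q) := by rw [hQ]
          _ = f * (aeval r (derivative Q) * s) := by rw [hch1]
          _ = s * (aeval r (derivative Q) * f) := by ring
          _ = s * D (aeval r Q) := by rw [hch2]
          _ = s * D (f ^ M * a) := by rw [hQ]
          _ = f ^ M * (s * D a) := by rw [hD2]; ring
      exact (mul_left_cancel₀ (pow_ne_zero M hr1) hcomb).symm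
    exact ⟨s, f, hs0, hr1, hDs, hr2, hid⟩
  refine ⟨⟨?_, ?_⟩, key⟩
  · intro hKer a ha k
    obtain ⟨α, β, hα, hβ, hDα, hDβ, hidab⟩ := key hKer
    have hEα : E α = 0 := (hKer α).1 hDα
    have hEβ : E β = 0 := (hKer β).1 hDβ
    have hiter : ∀ (k : ℕ) (a : A),
        α ^ k * (D.toLinearMap ^ k) a = β ^ k * (E.toLinearMap ^ k) a := by
      intro k
      induction k with
      | zero => intro a; simp
      | succ k ih =>
          intro a
          have hDk : ((D.toLinearMap) ^ (k + 1)) a = D (((D.toLinearMap) ^ k) a) := by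
            conv_lhs => rw [pow_succ', Module.End.mul_apply]
            rfl
          have hEk : ((E.toLinearMap) ^ (k + 1)) a = E (((E.toLinearMap) ^ k) a) := by
            conv_lhs => rw [pow_succ', Module.End.mul_apply]
            rfl
          have hDαk : D (α ^ k) = 0 := by
            rw [Derivation.leibniz_pow, hDα, smul_zero, smul_zero]
          have hEβk : E (β ^ k) = 0 := by
            rw [Derivation.leibniz_pow, hEβ, smul_zero, smul_zero]
          calc α ^ (k + 1) * ((D.toLinearMap) ^ (k + 1)) a
              = α * (α ^ k * D (((D.toLinearMap) ^ k) a)) := by rw [hDk]; ring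
            _ = α * D (α ^ k * ((D.toLinearMap) ^ k) a) := by
                rw [Derivation.leibniz, smul_eq_mul, smul_eq_mul, hDαk, mul_zero, add_zero]
            _ = β * E (α ^ k * ((D.toLinearMap) ^ k) a) := by rw [hidab]
            _ = β * E (β ^ k * ((E.toLinearMap) ^ k) a) := by rw [ih a]
            _ = β * (β ^ k * E (((E.toLinearMap) ^ k) a)) := by
                rw [Derivation.leibniz, smul_eq_mul, smul_eq_mul, hEβk, mul_zero, add_zero]
            _ = β ^ (k + 1) * ((E.toLinearMap) ^ (k + 1)) a := by rw [hEk]; ring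
    have h := hiter k a
    constructor
    · intro h0
      rw [h0, mul_zero] at h
      exact (mul_eq_zero.mp h.symm).resolve_left (pow_ne_zero _ hβ)
    · intro h0
      rw [h0, mul_zero] at h
      exact (mul_eq_zero.mp h).resolve_left (pow_ne_zero _ hα)
  · intro hdeg a
    by_cases ha : a = 0
    · simp [ha]
    · have := hdeg a ha 1
      simpa [pow_one] using this
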